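/- Let Ω ⊂ ℝⁿ be a convex set and ρ a metric on Ω such that every Euclidean line segment in Ω is a geodesic of (Ω,ρ). Fix ε > 0 and set c_ε(x,y) := ρ(x,y) + ε|x−y|². Let Γ ⊂ Ω² be a c_ε-cyclically monotone set. If (x₁,y₁), (x₂,y₂) ∈ Γ with y₁ ≠ y₂ and t ∈ (0,1), then (1−t)x₁ + t y₁ ≠ (1−t)x₂ + t y₂. -/

import Mathlib

open MeasureTheory Set Metric Filter Topology ENNReal NNReal

noncomputable section

/-- `n`-dimensional Euclidean space. -/
abbrev Eucl (n : ℕ) := EuclideanSpace ℝ (Fin n)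

/-- `ρ` is a metric on the set `Ω`. -/
def IsMetricOn {n : ℕ} (Ω : Set (Eucl n)) (ρ : Eucl n → Eucl n → ℝ) : Prop :=
  (∀ x ∈ Ω, ∀ y ∈ Ω, 0 ≤ ρ x y) ∧
  (∀ x ∈ Ω, ∀ y ∈ Ω, (ρ x y = 0 ↔ x = y)) ∧
  (∀ x ∈ Ω, ∀ y ∈ Ω, ρ x y = ρ y x) ∧
  (∀ x ∈ Ω, ∀ y ∈ Ω, ∀ z ∈ Ω, ρ x z ≤ ρ x y + ρ y z)

/-- Every Euclidean line segment in `Ω` is a geodesic of `(Ω, ρ)`. -/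
def SegmentsAreGeodesics {n : ℕ} (Ω : Set (Eucl n)) (ρ : Eucl n → Eucl n → ℝ) : Prop :=
  ∀ x ∈ Ω, ∀ y ∈ Ω, ∀ s ∈ Icc (0:ℝ) 1, ∀ t ∈ Icc (0:ℝ) 1,
    ρ ((1-s) • x + s • y) ((1-t) • x + t • y) = |t - s| * ρ x y

/-- The ball of `(Ω, ρ)` centred at `x` with radius `r`. -/
def rhoBall {n : ℕ} (Ω : Set (Eucl n)) (ρ : Eucl n → Eucl n → ℝ) (x : Eucl n) (r : ℝ) :
    Set (Eucl n) :=
  {y ∈ Ω | ρ x y < r}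

/-- The Lebesgue measure is locally doubling on `(Ω, ρ)`. -/
def LocallyDoubling {n : ℕ} (Ω : Set (Eucl n)) (ρ : Eucl n → Eucl n → ℝ) : Prop :=
  ∀ R > 0, ∃ C : ℝ, 1 ≤ C ∧ ∀ x ∈ Ω, ∀ r : ℝ, 0 < r → r ≤ R →
    volume (rhoBall Ω ρ x (2*r)) ≤ ENNReal.ofReal C * volume (rhoBall Ω ρ x r)

/-- Assumption A of the paper: (i) the topology of `ρ` on `Ω` is the Euclidean one,
(ii) Euclidean segments are geodesics, (iii) Lebesgue measure is locally doubling. -/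
def AssumptionA {n : ℕ} (Ω : Set (Eucl n)) (ρ : Eucl n → Eucl n → ℝ) : Prop :=
  (∀ x ∈ Ω, ∀ ε > 0, ∃ δ > 0, ∀ y ∈ Ω, dist x y < δ → ρ x y < ε) ∧
  (∀ x ∈ Ω, ∀ ε > 0, ∃ δ > 0, ∀ y ∈ Ω, ρ x y < δ → dist x y < ε) ∧
  SegmentsAreGeodesics Ω ρ ∧
  LocallyDoubling Ω ρ

/-- A set `Γ` is `c`-cyclically monotone for a real-valued cost `c`. -/
def CyclicallyMonotoneR {α : Type*} (c : α → α → ℝ) (Γ : Set (α × α)) : Prop :=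
  ∀ (m : ℕ) (p : Fin (m+1) → α × α), (∀ i, p i ∈ Γ) →
    ∑ i, c (p i).1 (p i).2 ≤ ∑ i, c (p i).1 (p (i+1)).2

lemma quad_aux {E : Type*} [NormedAddCommGroup E] [InnerProductSpace ℝ E] (a b d : E) :
    ‖a + d‖^2 + ‖b - d‖^2 = ‖a‖^2 + ‖b‖^2 + 2*‖d‖^2 + 2*(inner ℝ (a - b) d : ℝ) := by
  rw [norm_add_sq_real, norm_sub_sq_real, inner_sub_left]; ring

/-- Let `Ω ⊆ ℝⁿ` be convex and `ρ` a metric on `Ω` for which Euclidean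
segments are geodesics; let `c_ε(x,y) = ρ(x,y) + ε|x-y|²` with `ε > 0`.  If `Γ ⊆ Ω²` is
`c_ε`-cyclically monotone, `(x₁,y₁), (x₂,y₂) ∈ Γ` with `y₁ ≠ y₂` and `t ∈ (0,1)`, then
`(1-t) x₁ + t y₁ ≠ (1-t) x₂ + t y₂`. -/
theorem interpolants_disjoint {n : ℕ} (Ω : Set (Eucl n)) (hconv : Convex ℝ Ω)
    (ρ : Eucl n → Eucl n → ℝ) (hmet : IsMetricOn Ω ρ) (hgeo : SegmentsAreGeodesics Ω ρ)
    (ε : ℝ) (hε : 0 < ε)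
    (Γ : Set (Eucl n × Eucl n)) (hΓΩ : Γ ⊆ Ω ×ˢ Ω)
    (hΓmono : CyclicallyMonotoneR (fun x y => ρ x y + ε * ‖x - y‖^2) Γ)
    (x₁ y₁ x₂ y₂ : Eucl n) (h₁ : (x₁, y₁) ∈ Γ) (h₂ : (x₂, y₂) ∈ Γ) (hy : y₁ ≠ y₂)
    (t : ℝ) (ht0 : 0 < t) (ht1 : t < 1) :
    (1-t) • x₁ + t • y₁ ≠ (1-t) • x₂ + t • y₂ := by
  intro heq
  have hmem₁ := hΓΩ h₁
  have hmem₂ := hΓΩ h₂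
  rw [Set.mem_prod] at hmem₁ hmem₂
  obtain ⟨hx₁, hy₁⟩ := hmem₁
  obtain ⟨hx₂, hy₂⟩ := hmem₂
  have ht0' : (0:ℝ) ≤ t := le_of_lt ht0
  have ht1t : (0:ℝ) < 1 - t := by linarith
  have hzΩ : (1-t) • x₁ + t • y₁ ∈ Ω := hconv hx₁ hy₁ (le_of_lt ht1t) ht0' (by ring)
  have htIcc : t ∈ Set.Icc (0:ℝ) 1 := ⟨ht0', le_of_lt ht1⟩
  have h0Icc : (0:ℝ) ∈ Set.Icc (0:ℝ) 1 := ⟨le_refl _, zero_le_one⟩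
  have h1Icc : (1:ℝ) ∈ Set.Icc (0:ℝ) 1 := ⟨zero_le_one, le_refl _⟩
  have g1 : ρ x₁ ((1-t) • x₁ + t • y₁) = t * ρ x₁ y₁ := by
    have := hgeo x₁ hx₁ y₁ hy₁ 0 h0Icc t htIcc
    simpa [abs_of_nonneg ht0'] using this
  have g2 : ρ ((1-t) • x₁ + t • y₁) y₂ = (1-t) * ρ x₂ y₂ := by
    have := hgeo x₂ hx₂ y₂ hy₂ t htIcc 1 h1Icc
    rw [← heq] at this
    simpa [abs_of_nonneg (le_of_lt ht1t)] using this
  have g3 : ρ ((1-t) • x₁ + t • y₁) y₁ = (1-t) * ρ x₁ y₁ := by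
    have := hgeo x₁ hx₁ y₁ hy₁ t htIcc 1 h1Icc
    simpa [abs_of_nonneg (le_of_lt ht1t)] using this
  have g4 : ρ x₂ ((1-t) • x₁ + t • y₁) = t * ρ x₂ y₂ := by
    have := hgeo x₂ hx₂ y₂ hy₂ 0 h0Icc t htIcc
    rw [← heq] at this
    simpa [abs_of_nonneg ht0'] using this
  obtain ⟨hnn, hzero, hsymm, htri⟩ := hmet
  have tri1 := htri x₁ hx₁ ((1-t) • x₁ + t • y₁) hzΩ y₂ hy₂
  have tri2 := htri x₂ hx₂ ((1-t) • x₁ + t • y₁) hzΩ y₁ hy₁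
  rw [g1, g2] at tri1
  rw [g3, g4] at tri2
  have rhosum : ρ x₁ y₂ + ρ x₂ y₁ ≤ ρ x₁ y₁ + ρ x₂ y₂ := by linarith
  -- quadratic part
  have hxy : x₁ - x₂ = (t/(1-t)) • (y₂ - y₁) := by
    have h' : (1-t) • (x₁ - x₂) = t • (y₂ - y₁) := by
      linear_combination (norm := module) heq
    have h2 := congrArg (fun v => (1-t)⁻¹ • v) h'
    simp only [smul_smul, inv_mul_cancel₀ (ne_of_gt ht1t), one_smul] at h2
    rw [h2, div_eq_inv_mul]
  have hab : (x₁ - y₁) - (x₂ - y₂) = (-((t/(1-t)) + 1)) • (y₁ - y₂) := by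
    linear_combination (norm := module) hxy
  have hinner : (inner ℝ ((x₁ - y₁) - (x₂ - y₂)) (y₁ - y₂) : ℝ) =
      (-((t/(1-t)) + 1)) * ‖y₁ - y₂‖^2 := by
    rw [hab, real_inner_smul_left, real_inner_self_eq_norm_sq]
  have key : ‖x₁ - y₂‖^2 + ‖x₂ - y₁‖^2 =
      ‖x₁ - y₁‖^2 + ‖x₂ - y₂‖^2 - 2*(t/(1-t))*‖y₁ - y₂‖^2 := by
    have e1 : x₁ - y₂ = (x₁ - y₁) + (y₁ - y₂) := by abel
    have e2 : x₂ - y₁ = (x₂ - y₂) - (y₁ - y₂) := by abel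
    rw [e1, e2, quad_aux, hinner]
    ring
  have hdpos : (0:ℝ) < ‖y₁ - y₂‖ := by
    rw [norm_pos_iff]; exact sub_ne_zero.mpr hy
  have hupos : (0:ℝ) < t / (1-t) := div_pos ht0 ht1t
  have hgain : (0:ℝ) < ε * (2*(t/(1-t))*‖y₁ - y₂‖^2) := by positivity
  -- cyclic monotonicity with two points
  have hcm := hΓmono 1 ![(x₁, y₁), (x₂, y₂)] (by
    intro i; fin_cases i <;> simpa)
  simp only [Fin.sum_univ_succ, Fin.sum_univ_zero, Fin.isValue] at hcm
  norm_num [show ((0:Fin 2) + 1) = 1 from rfl, show ((1:Fin 2) + 1) = 0 from rfl] at hcm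
  have hεkey : ε * ‖x₁ - y₂‖^2 + ε * ‖x₂ - y₁‖^2 =
      ε * ‖x₁ - y₁‖^2 + ε * ‖x₂ - y₂‖^2 - ε * (2*(t/(1-t))*‖y₁ - y₂‖^2) := by
    have h3 : ε * ‖x₁ - y₂‖^2 + ε * ‖x₂ - y₁‖^2 = ε * (‖x₁ - y₂‖^2 + ‖x₂ - y₁‖^2) := by ring
    rw [h3, key]; ring
  linarith
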